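/- Let r ≥ 2 and n ≥ (r−1)k + k + (r−1). Let Q be an (r−1)-subset of {1,...,n} and A a k-subset disjoint from Q. Then the number of edges of KG^r_{n,k} contained in S_Q ∪ {A} (where S_Q is the union of the stars of elements of Q) is at most ∏_{i=1}^{r−1} C(n−i, k−1). -/

import Mathlib

open Finset

/-- Upper bound on the number of edges of `KG^r_{n,k}` inside `S_Q ∪ {A}` where
`|Q| = r-1` and `A` is a `k`-set disjoint from `Q`. -/
theorem edges_in_SQ_union_A_upper (n k r : ℕ) (hr : 2 ≤ r) (hk : 1 ≤ k)
    (hn : (r - 1) * k + k + (r - 1) ≤ n)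
    (Q : Finset ℕ) (hQ : Q ⊆ Finset.range n) (hQcard : Q.card = r - 1)
    (A : Finset ℕ) (hA : A ⊆ Finset.range n) (hAcard : A.card = k)
    (hAQ : Disjoint A Q) :
    (((insert A (((Finset.range n).powersetCard k).filter
          (fun B => (B ∩ Q).Nonempty))).powersetCard r).filter
        (fun E => ∀ B ∈ E, ∀ C ∈ E, B ≠ C → Disjoint B C)).card
      ≤ ∏ i ∈ Finset.Icc 1 (r - 1), Nat.choose (n - i) (k - 1) := by
  classical
  set 𝒮 : Finset (Finset ℕ) :=
    ((Finset.range n).powersetCard k).filter (fun B => (B ∩ Q).Nonempty) with h𝒮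
  set T := ((insert A 𝒮).powersetCard r).filter
      (fun E => ∀ B ∈ E, ∀ C ∈ E, B ≠ C → Disjoint B C) with hT
  have hAQ' : ∀ x, x ∈ A → x ∈ Q → False := fun x hxA hxQ =>
    Finset.disjoint_left.mp hAQ hxA hxQ
  set c : ℕ → ℕ := fun x => (Q.filter (· < x)).card with hc
  set S : ℕ → Finset (Finset ℕ) := fun x =>
    ((Finset.range n).powersetCard k).filter
      (fun B => x ∈ B ∧ ∀ y ∈ B ∩ Q, y = x) with hSdef
  set g : Finset ℕ → ℕ :=
    fun B => if h : (B ∩ Q).Nonempty then (B ∩ Q).min' h else 0 with hg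
  have hgmem : ∀ B, (B ∩ Q).Nonempty → g B ∈ B ∩ Q := by
    intro B h
    simp only [hg, dif_pos h]
    exact (B ∩ Q).min'_mem h
  -- key structure of edges
  have key : ∀ E ∈ T, A ∈ E ∧ ∀ x ∈ Q, ∃ B ∈ E, x ∈ B ∧ (∀ y ∈ B ∩ Q, y = x) ∧
      ∀ B' ∈ E, x ∈ B' → B' = B := by
    intro E hE
    rw [hT, mem_filter, mem_powersetCard] at hE
    obtain ⟨⟨hEsub, hEcard⟩, hdisj⟩ := hE
    have hstar : ∀ B ∈ E, B ≠ A → (B ∩ Q).Nonempty := by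
      intro B hB hBA
      rcases mem_insert.mp (hEsub hB) with h | h
      · exact absurd h hBA
      · exact (mem_filter.mp h).2
    have hginj : ∀ B ∈ E, ∀ B' ∈ E, B ≠ A → B' ≠ A → g B = g B' → B = B' := by
      intro B hB B' hB' hBA hB'A hgg
      by_contra hne
      have h1 := hgmem B (hstar B hB hBA)
      have h2 := hgmem B' (hstar B' hB' hB'A)
      have hd := hdisj B hB B' hB' hne
      exact (Finset.disjoint_left.mp hd (mem_inter.mp h1).1)
        (hgg ▸ (mem_inter.mp h2).1)
    have hAE : A ∈ E := by
      by_contra hAE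
      have hmaps : ∀ B ∈ E, g B ∈ Q := fun B hB =>
        (mem_inter.mp (hgmem B (hstar B hB (by rintro rfl; exact hAE hB)))).2
      have hinj : Set.InjOn g E := by
        intro B hB B' hB' h
        exact hginj B hB B' hB' (by rintro rfl; exact hAE hB)
          (by rintro rfl; exact hAE hB') h
      have := Finset.card_le_card_of_injOn g hmaps hinj
      rw [hEcard, hQcard] at this
      omega
    refine ⟨hAE, ?_⟩
    have hE'card : (E.erase A).card = r - 1 := by
      rw [card_erase_of_mem hAE, hEcard]
    have himg : (E.erase A).image g = Q := by
      apply Finset.eq_of_subset_of_card_le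
      · intro y hy
        obtain ⟨B, hB, rfl⟩ := mem_image.mp hy
        exact (mem_inter.mp (hgmem B
          (hstar B (mem_of_mem_erase hB) (mem_erase.mp hB).1))).2
      · rw [hQcard, Finset.card_image_of_injOn, hE'card]
        intro B hB B' hB' h
        exact hginj B (mem_of_mem_erase hB) B' (mem_of_mem_erase hB')
          (mem_erase.mp hB).1 (mem_erase.mp hB').1 h
    intro x hx
    have hx' : x ∈ (E.erase A).image g := himg ▸ hx
    obtain ⟨B, hB, hgB⟩ := mem_image.mp hx'
    have hBA := (mem_erase.mp hB).1
    have hBE := mem_of_mem_erase hB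
    have hxB : x ∈ B := by
      have := hgmem B (hstar B hBE hBA)
      rw [hgB] at this
      exact (mem_inter.mp this).1
    refine ⟨B, hBE, hxB, ?_, ?_⟩
    · intro y hy
      have hyQ : y ∈ Q := (mem_inter.mp hy).2
      have hy' : y ∈ (E.erase A).image g := himg ▸ hyQ
      obtain ⟨B'', hB'', hgB''⟩ := mem_image.mp hy'
      have hB''E := mem_of_mem_erase hB''
      have hyB'' : y ∈ B'' := by
        have := hgmem B'' (hstar B'' hB''E (mem_erase.mp hB'').1)
        rw [hgB''] at this
        exact (mem_inter.mp this).1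
      have hBB'' : B'' = B := by
        by_contra hne
        exact (Finset.disjoint_left.mp (hdisj B'' hB''E B hBE hne) hyB'')
          (mem_inter.mp hy).1
      rw [← hgB, ← hgB'', hBB'']
    · intro B' hB' hxB'
      have hB'A : B' ≠ A := by
        rintro rfl
        exact hAQ' x hxB' hx
      by_contra hne
      exact (Finset.disjoint_left.mp (hdisj B' hB' B hBE hne) hxB') hxB
  -- the injection into a product of stars
  set F : Finset (Finset ℕ) → (∀ a ∈ Q, Finset ℕ) :=
    fun E x _ => (E.filter (fun B => x ∈ B)).sup id with hF
  have hFval : ∀ E ∈ T, ∀ x, ∀ hx : x ∈ Q, ∃ B ∈ E, F E x hx = B ∧ x ∈ B ∧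
      (∀ y ∈ B ∩ Q, y = x) ∧ ∀ B' ∈ E, x ∈ B' → B' = B := by
    intro E hE x hx
    obtain ⟨-, hex⟩ := key E hE
    obtain ⟨B, hB, hxB, hBQ, huniq⟩ := hex x hx
    refine ⟨B, hB, ?_, hxB, hBQ, huniq⟩
    have hfil : E.filter (fun B => x ∈ B) = {B} := by
      ext C
      simp only [mem_filter, mem_singleton]
      constructor
      · rintro ⟨hC, hxC⟩; exact huniq C hC hxC
      · rintro rfl; exact ⟨hB, hxB⟩
    simp only [hF, hfil, Finset.sup_singleton, id]
  have hFmem : ∀ E ∈ T, F E ∈ Q.pi S := by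
    intro E hE
    rw [Finset.mem_pi]
    intro x hx
    obtain ⟨B, hB, hFB, hxB, hBQ, -⟩ := hFval E hE x hx
    have hEsub : E ⊆ insert A 𝒮 := (mem_powersetCard.mp (mem_filter.mp hE).1).1
    have hB𝒮 : B ∈ 𝒮 := by
      rcases mem_insert.mp (hEsub hB) with h | h
      · exact absurd (h ▸ hxB) (fun hxA => hAQ' x hxA hx)
      · exact h
    rw [hFB, hSdef]
    simp only [mem_filter]
    exact ⟨(mem_filter.mp hB𝒮).1, hxB, hBQ⟩
  have hFinj : Set.InjOn F T := by
    have main : ∀ E ∈ T, ∀ E' ∈ T, F E = F E' → ∀ B ∈ E, B ∈ E' := by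
      intro E hE E' hE' hFF B hB
      by_cases hBA : B = A
      · subst hBA; exact (key E' hE').1
      · have hEsub : E ⊆ insert A 𝒮 := (mem_powersetCard.mp (mem_filter.mp hE).1).1
        have hB𝒮 : B ∈ 𝒮 := by
          rcases mem_insert.mp (hEsub hB) with h | h
          · exact absurd h hBA
          · exact h
        obtain ⟨x, hx⟩ := (mem_filter.mp hB𝒮).2
        obtain ⟨hxB, hxQ⟩ := mem_inter.mp hx
        obtain ⟨B₁, hB₁, hF1, hx1, -, huniq1⟩ := hFval E hE x hxQ
        obtain ⟨B₂, hB₂, hF2, hx2, -, -⟩ := hFval E' hE' x hxQ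
        have hBB₁ : B = B₁ := huniq1 B hB hxB
        have : B₁ = B₂ := by
          rw [← hF1, ← hF2, hFF]
        rw [hBB₁, this]
        exact hB₂
    intro E₁ hE₁ E₂ hE₂ hFF
    have h1 := mem_coe.mp hE₁
    have h2 := mem_coe.mp hE₂
    ext B
    exact ⟨fun hB => main E₁ h1 E₂ h2 hFF B hB,
      fun hB => main E₂ h2 E₁ h1 hFF.symm B hB⟩
  have hcard : T.card ≤ ∏ x ∈ Q, (S x).card := by
    have := Finset.card_le_card_of_injOn F hFmem hFinj
    rwa [Finset.card_pi] at this
  -- bound on each star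
  have hSx : ∀ x ∈ Q, (S x).card ≤ Nat.choose (n - (c x + 1)) (k - 1) := by
    intro x hx
    have hbound : (S x).card ≤
        (((Finset.range n) \ insert x (Q.filter (· < x))).powersetCard (k - 1)).card := by
      apply Finset.card_le_card_of_injOn (fun B => B.erase x)
      · intro B hB
        rw [hSdef] at hB
        simp only [mem_coe, mem_filter, mem_powersetCard] at hB
        obtain ⟨⟨hBsub, hBcard⟩, hxB, hBQ⟩ := hB
        rw [mem_coe, mem_powersetCard]
        constructor
        · intro y hy
          obtain ⟨hyx, hyB⟩ := mem_erase.mp hy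
          rw [mem_sdiff, mem_insert]
          push_neg
          refine ⟨hBsub hyB, hyx, fun hyf => ?_⟩
          exact hyx (hBQ y (mem_inter.mpr ⟨hyB, (mem_filter.mp hyf).1⟩))
        · rw [card_erase_of_mem hxB, hBcard]
      · intro B hB B' hB' h
        have hxB : x ∈ B := (mem_filter.mp (mem_coe.mp hB)).2.1
        have hxB' : x ∈ B' := (mem_filter.mp (mem_coe.mp hB')).2.1
        rw [← insert_erase hxB, ← insert_erase hxB']
        exact congrArg (insert x) h
    rw [Finset.card_powersetCard] at hbound
    have hTsub : insert x (Q.filter (· < x)) ⊆ Finset.range n := by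
      intro y hy
      rcases mem_insert.mp hy with rfl | hy
      · exact hQ hx
      · exact hQ (mem_filter.mp hy).1
    have hTcard : (insert x (Q.filter (· < x))).card = c x + 1 := by
      rw [card_insert_of_notMem (by simp [mem_filter])]
    rwa [card_sdiff_of_subset hTsub, card_range, hTcard] at hbound
  -- reindexing the product
  have hcmono : ∀ x ∈ Q, ∀ y ∈ Q, x < y → c x < c y := by
    intro x hx y hy hxy
    apply Finset.card_lt_card
    constructor
    · intro z hz
      obtain ⟨hzQ, hzx⟩ := mem_filter.mp hz
      exact mem_filter.mpr ⟨hzQ, lt_trans hzx hxy⟩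
    · intro habs
      have : x ∈ Q.filter (· < x) := habs (mem_filter.mpr ⟨hx, hxy⟩)
      simp [mem_filter] at this
  have hcinj : ∀ x ∈ Q, ∀ y ∈ Q, c x + 1 = c y + 1 → x = y := by
    intro x hx y hy h
    rcases lt_trichotomy x y with hlt | rfl | hlt
    · have := hcmono x hx y hy hlt; omega
    · rfl
    · have := hcmono y hy x hx hlt; omega
  have himg2 : Q.image (fun x => c x + 1) = Finset.Icc 1 (r - 1) := by
    apply Finset.eq_of_subset_of_card_le
    · intro i hi
      obtain ⟨x, hx, rfl⟩ := mem_image.mp hi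
      rw [mem_Icc]
      have hsub : Q.filter (· < x) ⊆ Q.erase x := by
        intro y hy
        exact mem_erase.mpr ⟨ne_of_lt (mem_filter.mp hy).2, (mem_filter.mp hy).1⟩
      have h2 := Finset.card_le_card hsub
      rw [card_erase_of_mem hx, hQcard] at h2
      have : (Q.filter (· < x)).card = c x := rfl
      omega
    · rw [Nat.card_Icc, Finset.card_image_of_injOn, hQcard]
      · omega
      · exact fun x hx y hy h => hcinj x hx y hy h
  calc T.card ≤ ∏ x ∈ Q, (S x).card := hcard
    _ ≤ ∏ x ∈ Q, Nat.choose (n - (c x + 1)) (k - 1) := Finset.prod_le_prod' hSx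
    _ = ∏ i ∈ Finset.Icc 1 (r - 1), Nat.choose (n - i) (k - 1) := by
        rw [← himg2, Finset.prod_image hcinj]
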